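/- For every integer m ≥ 0, Q_m(q) + q^{m+1} Q_{m+3}(q) = q^{m+1}/(q;q)_∞. -/

import Mathlib

open Filter

set_option maxHeartbeats 1000000


namespace Dyson

/-- The rank of a partition: largest part minus number of parts. -/
def rank {n : ℕ} (π : n.Partition) : ℤ :=
  (π.parts.sup : ℤ) - π.parts.card

/-- The Euler product `(q;q)_∞`. -/
noncomputable def euler (q : ℝ) : ℝ := ∏' j : ℕ, (1 - q ^ (j + 1))

/-- `Q_m(q)`: generating function for nonempty partitions of rank ≥ m. -/
noncomputable def Q (q : ℝ) (m : ℤ) : ℝ :=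
  ∑' n : ℕ, (Nat.card {π : (n + 1).Partition // m ≤ rank π} : ℝ) * q ^ (n + 1)

noncomputable def qPoch (q : ℝ) (n : ℕ) : ℝ := ∏ j ∈ Finset.range n, (1 - q ^ (j + 1))

noncomputable def qbinom (q : ℝ) (a b : ℤ) : ℝ :=
  if 0 ≤ b ∧ b ≤ a then qPoch q a.toNat / (qPoch q b.toNat * qPoch q (a - b).toNat) else 0

noncomputable def QL (q : ℝ) (m L : ℤ) : ℝ :=
  ∑' n : ℕ,
    (Nat.card {π : (n + 1).Partition // m ≤ rank π ∧ (π.parts.sup : ℤ) ≤ L} : ℝ) * q ^ (n + 1)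

def partAt {n : ℕ} (π : n.Partition) (j : ℕ) : ℕ :=
  ((π.parts.sort (· ≤ ·)).reverse.getD j 0)

def inRankSet {n : ℕ} (π : n.Partition) (k : ℤ) : Prop :=
  ∃ j : ℕ, (j : ℤ) - partAt π (j + 1) = k

noncomputable def G (q : ℝ) (k : ℤ) : ℝ :=
  ∑' n : ℕ, (Nat.card {π : n.Partition // inRankSet π k} : ℝ) * q ^ n

def crank {n : ℕ} (π : n.Partition) : ℤ :=
  if π.parts.count 1 = 0 then (π.parts.sup : ℤ)
  else ((π.parts.filter (fun p => π.parts.count 1 < p)).card : ℤ) - π.parts.count 1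



section Aux

lemma sup_mem_of_ne_zero {s : Multiset ℕ} (h : s ≠ 0) : s.sup ∈ s := by
  induction s using Multiset.induction with
  | empty => simp at h
  | cons a s ih =>
    rcases eq_or_ne s 0 with rfl | hs
    · simp
    · rw [Multiset.sup_cons]
      rcases le_total a s.sup with h1 | h1
      · rw [sup_eq_right.mpr h1]; exact Multiset.mem_cons_of_mem (ih hs)
      · rw [sup_eq_left.mpr h1]; exact Multiset.mem_cons_self a s

lemma card_le_sum {s : Multiset ℕ} (h : ∀ x ∈ s, 0 < x) : Multiset.card s ≤ s.sum := by
  induction s using Multiset.induction with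
  | empty => simp
  | cons a s ih =>
    have ha : 0 < a := h a (Multiset.mem_cons_self a s)
    have := ih fun x hx => h x (Multiset.mem_cons_of_mem hx)
    rw [Multiset.sum_cons, Multiset.card_cons]; omega

lemma sum_map_pred {s : Multiset ℕ} (h : ∀ x ∈ s, 0 < x) :
    (s.map (· - 1)).sum = s.sum - Multiset.card s := by
  induction s using Multiset.induction with
  | empty => simp
  | cons a s ih =>
    have ha : 0 < a := h a (Multiset.mem_cons_self a s)
    have hs : ∀ x ∈ s, 0 < x := fun x hx => h x (Multiset.mem_cons_of_mem hx)
    have hcard : Multiset.card s ≤ s.sum := card_le_sum hs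
    rw [Multiset.map_cons, Multiset.sum_cons, Multiset.sum_cons, Multiset.card_cons, ih hs]
    omega

lemma sum_map_succ (s : Multiset ℕ) : (s.map (· + 1)).sum = s.sum + Multiset.card s := by
  induction s using Multiset.induction with
  | empty => simp
  | cons a s ih =>
    rw [Multiset.map_cons, Multiset.sum_cons, Multiset.sum_cons, Multiset.card_cons, ih]
    omega

lemma sum_filter_ne_zero (s : Multiset ℕ) : (s.filter (· ≠ 0)).sum = s.sum := by
  conv_rhs => rw [← Multiset.filter_add_not (· ≠ 0) s, Multiset.sum_add]
  have h0 : (s.filter (fun x => ¬ x ≠ 0)).sum = 0 := by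
    apply Multiset.sum_eq_zero
    intro x hx
    have := (Multiset.mem_filter.mp hx).2
    omega
  omega

/- ## Dyson's map -/

def dysonFwd (m n' : ℕ) (μ : n'.Partition) : (n' + m + 1).Partition where
  parts := (Multiset.card μ.parts + m + 1) ::ₘ (μ.parts.map (· - 1)).filter (· ≠ 0)
  parts_pos := by
    intro i hi
    rcases Multiset.mem_cons.mp hi with rfl | hi
    · omega
    · have := (Multiset.mem_filter.mp hi).2
      omega
  parts_sum := by
    rw [Multiset.sum_cons, sum_filter_ne_zero, sum_map_pred (fun x hx => μ.parts_pos hx),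
      μ.parts_sum]
    have h1 : Multiset.card μ.parts ≤ μ.parts.sum := card_le_sum (fun x hx => μ.parts_pos hx)
    rw [μ.parts_sum] at h1
    omega

lemma dysonFwd_sup (m n' : ℕ) (μ : n'.Partition) (h : rank μ ≤ (m : ℤ) + 2) :
    (dysonFwd m n' μ).parts.sup = Multiset.card μ.parts + m + 1 := by
  have hsup : μ.parts.sup ≤ Multiset.card μ.parts + m + 2 := by
    unfold rank at h; omega
  show ((Multiset.card μ.parts + m + 1) ::ₘ _).sup = _
  rw [Multiset.sup_cons]
  rw [sup_eq_left]
  apply Multiset.sup_le.mpr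
  intro x hx
  have hx2 := Multiset.mem_of_mem_filter hx
  obtain ⟨y, hy, rfl⟩ := Multiset.mem_map.mp hx2
  have := Multiset.le_sup hy
  omega

lemma rank_dysonFwd (m n' : ℕ) (μ : n'.Partition) (h : rank μ ≤ (m : ℤ) + 2) :
    (m : ℤ) ≤ rank (dysonFwd m n' μ) := by
  have hsup := dysonFwd_sup m n' μ h
  have hcard : Multiset.card (dysonFwd m n' μ).parts
      ≤ Multiset.card μ.parts + 1 := by
    show Multiset.card (_ ::ₘ _) ≤ _
    rw [Multiset.card_cons]
    have h1 := Multiset.card_le_card (Multiset.filter_le (· ≠ 0) (μ.parts.map (· - 1)))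
    rw [Multiset.card_map] at h1
    omega
  unfold rank
  omega

def dysonBwd (m n' : ℕ) (π : (n' + m + 1).Partition) (h : (m : ℤ) ≤ rank π) : n'.Partition where
  parts := ((π.parts.erase π.parts.sup).map (· + 1)) +
    Multiset.replicate (π.parts.sup - m - Multiset.card π.parts) 1
  parts_pos := by
    intro i hi
    rcases Multiset.mem_add.mp hi with hi | hi
    · obtain ⟨y, _, rfl⟩ := Multiset.mem_map.mp hi
      omega
    · rw [Multiset.eq_of_mem_replicate hi]; omega
  parts_sum := by
    have hne : π.parts ≠ 0 := by
      intro h0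
      have := π.parts_sum
      rw [h0] at this
      simp at this
    have hmem := sup_mem_of_ne_zero hne
    have herase : π.parts.sup + (π.parts.erase π.parts.sup).sum = n' + m + 1 := by
      rw [← Multiset.sum_cons, Multiset.cons_erase hmem, π.parts_sum]
    have hcpos : 1 ≤ Multiset.card π.parts := by
      rw [Nat.one_le_iff_ne_zero, Ne, Multiset.card_eq_zero]; exact hne
    have hrank : Multiset.card π.parts + m ≤ π.parts.sup := by
      unfold rank at h; omega
    have he : Multiset.card (π.parts.erase π.parts.sup) = Multiset.card π.parts - 1 := by
      rw [Multiset.card_erase_of_mem hmem, Nat.pred_eq_sub_one]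
    rw [Multiset.sum_add, sum_map_succ, Multiset.sum_replicate, smul_eq_mul, mul_one, he]
    omega

lemma dysonBwd_card (m n' : ℕ) (π : (n' + m + 1).Partition) (h : (m : ℤ) ≤ rank π)
    (hne : π.parts ≠ 0) :
    Multiset.card (dysonBwd m n' π h).parts = π.parts.sup - m - 1 := by
  have hmem := sup_mem_of_ne_zero hne
  have hcpos : 1 ≤ Multiset.card π.parts := by
    rw [Nat.one_le_iff_ne_zero, Ne, Multiset.card_eq_zero]; exact hne
  have hrank : Multiset.card π.parts + m ≤ π.parts.sup := by
    unfold rank at h; omega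
  show Multiset.card (_ + _) = _
  rw [Multiset.card_add, Multiset.card_map, Multiset.card_replicate,
    Multiset.card_erase_of_mem hmem, Nat.pred_eq_sub_one]
  omega

lemma rank_dysonBwd (m n' : ℕ) (π : (n' + m + 1).Partition) (h : (m : ℤ) ≤ rank π) :
    rank (dysonBwd m n' π h) ≤ (m : ℤ) + 2 := by
  have hne : π.parts ≠ 0 := by
    intro h0
    have := π.parts_sum
    rw [h0] at this
    simp at this
  have hmem := sup_mem_of_ne_zero hne
  have hcpos : 1 ≤ Multiset.card π.parts := by
    rw [Nat.one_le_iff_ne_zero, Ne, Multiset.card_eq_zero]; exact hne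
  have hrank : Multiset.card π.parts + m ≤ π.parts.sup := by
    unfold rank at h; omega
  have hcard := dysonBwd_card m n' π h hne
  have hsup : (dysonBwd m n' π h).parts.sup ≤ π.parts.sup + 1 := by
    apply Multiset.sup_le.mpr
    intro x hx
    rcases Multiset.mem_add.mp hx with hx | hx
    · obtain ⟨y, hy, rfl⟩ := Multiset.mem_map.mp hx
      have := Multiset.le_sup (Multiset.mem_of_mem_erase hy)
      omega
    · rw [Multiset.eq_of_mem_replicate hx]; omega
  unfold rank
  omega


lemma bwd_fwd (m n' : ℕ) (μ : n'.Partition) (h : rank μ ≤ (m : ℤ) + 2)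
    (h2 : (m : ℤ) ≤ rank (dysonFwd m n' μ)) :
    dysonBwd m n' (dysonFwd m n' μ) h2 = μ := by
  apply Nat.Partition.ext
  have hsup := dysonFwd_sup m n' μ h
  set s := μ.parts with hs
  set r := Multiset.card s with hr
  set u := (s.map (· - 1)).filter (· ≠ 0) with hu
  have hparts : (dysonFwd m n' μ).parts = (r + m + 1) ::ₘ u := rfl
  have herase : (dysonFwd m n' μ).parts.erase ((dysonFwd m n' μ).parts.sup) = u := by
    rw [hsup, hparts, Multiset.erase_cons_head]
  have hcards : Multiset.card (dysonFwd m n' μ).parts = 1 + Multiset.card u := by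
    rw [hparts, Multiset.card_cons]; omega
  -- u as a filtered submultiset of s
  have hu2 : u = (s.filter (fun x => x - 1 ≠ 0)).map (· - 1) := by
    rw [hu, Multiset.filter_map]
    rfl
  have humap : u.map (· + 1) = s.filter (fun x => x - 1 ≠ 0) := by
    rw [hu2, Multiset.map_map]
    have : ∀ x ∈ s.filter (fun x => x - 1 ≠ 0), ((· + 1) ∘ (· - 1)) x = id x := by
      intro x hx
      have := μ.parts_pos (Multiset.mem_of_mem_filter hx)
      simp only [Function.comp_apply, id_eq]
      omega
    rw [Multiset.map_congr rfl this, Multiset.map_id]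
  have hcardu : Multiset.card u = Multiset.card (s.filter (fun x => x - 1 ≠ 0)) := by
    rw [hu2, Multiset.card_map]
  have hfsplit : s.filter (fun x => x - 1 ≠ 0) + s.filter (fun x => ¬ x - 1 ≠ 0) = s :=
    Multiset.filter_add_not _ s
  have hcsplit : Multiset.card (s.filter (fun x => x - 1 ≠ 0))
      + Multiset.card (s.filter (fun x => ¬ x - 1 ≠ 0)) = r := by
    rw [← Multiset.card_add, hfsplit]
  have hone : s.filter (fun x => ¬ x - 1 ≠ 0) = Multiset.replicate
      (Multiset.card (s.filter (fun x => ¬ x - 1 ≠ 0))) 1 := by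
    have : ∀ x ∈ s.filter (fun x => ¬ x - 1 ≠ 0), x = 1 := by
      intro x hx
      have h1 := (Multiset.mem_filter.mp hx).2
      have h2 := μ.parts_pos (Multiset.mem_of_mem_filter hx)
      omega
    exact Multiset.eq_replicate_card.mpr this
  show ((dysonFwd m n' μ).parts.erase ((dysonFwd m n' μ).parts.sup)).map (· + 1)
      + Multiset.replicate ((dysonFwd m n' μ).parts.sup - m
        - Multiset.card (dysonFwd m n' μ).parts) 1 = s
  rw [herase, humap, hsup, hcards]
  have hrep : r + m + 1 - m - (1 + Multiset.card u)
      = Multiset.card (s.filter (fun x => ¬ x - 1 ≠ 0)) := by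
    omega
  rw [hrep, ← hone, hfsplit]

lemma fwd_bwd (m n' : ℕ) (π : (n' + m + 1).Partition) (h : (m : ℤ) ≤ rank π) :
    dysonFwd m n' (dysonBwd m n' π h) = π := by
  apply Nat.Partition.ext
  have hne : π.parts ≠ 0 := by
    intro h0
    have := π.parts_sum
    rw [h0] at this
    simp at this
  have hmem := sup_mem_of_ne_zero hne
  have hcpos : 1 ≤ Multiset.card π.parts := by
    rw [Nat.one_le_iff_ne_zero, Ne, Multiset.card_eq_zero]; exact hne
  have hrank : Multiset.card π.parts + m ≤ π.parts.sup := by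
    unfold rank at h; omega
  have hcard := dysonBwd_card m n' π h hne
  set l := π.parts.sup with hl
  set e := π.parts.erase l with he
  set k := l - m - Multiset.card π.parts with hk
  have hparts : (dysonBwd m n' π h).parts = e.map (· + 1) + Multiset.replicate k 1 := rfl
  show (Multiset.card (dysonBwd m n' π h).parts + m + 1) ::ₘ
      (((dysonBwd m n' π h).parts.map (· - 1)).filter (· ≠ 0)) = π.parts
  have hhead : Multiset.card (dysonBwd m n' π h).parts + m + 1 = l := by
    rw [hcard]; omega
  have hmap : (dysonBwd m n' π h).parts.map (· - 1) = e + Multiset.replicate k 0 := by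
    rw [hparts, Multiset.map_add, Multiset.map_map, Multiset.map_replicate]
    congr 1
    · have : ∀ x ∈ e, ((· - 1) ∘ (· + 1)) x = id x := by
        intro x hx
        simp
      rw [Multiset.map_congr rfl this, Multiset.map_id]
  have hfilter : ((dysonBwd m n' π h).parts.map (· - 1)).filter (· ≠ 0) = e := by
    rw [hmap, Multiset.filter_add]
    have h1 : e.filter (· ≠ 0) = e := by
      apply Multiset.filter_eq_self.mpr
      intro x hx
      have := π.parts_pos (Multiset.mem_of_mem_erase hx)
      omega
    have h2 : (Multiset.replicate k (0:ℕ)).filter (· ≠ 0) = 0 := by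
      apply Multiset.filter_eq_nil.mpr
      intro x hx
      rw [Multiset.eq_of_mem_replicate hx]
      omega
    rw [h1, h2, add_zero]
  rw [hfilter, hhead, Multiset.cons_erase hmem]

def dysonEquiv (m n' : ℕ) :
    {μ : n'.Partition // rank μ ≤ (m : ℤ) + 2} ≃
      {π : (n' + m + 1).Partition // (m : ℤ) ≤ rank π} where
  toFun := fun x => ⟨dysonFwd m n' x.1, rank_dysonFwd m n' x.1 x.2⟩
  invFun := fun x => ⟨dysonBwd m n' x.1 x.2, rank_dysonBwd m n' x.1 x.2⟩
  left_inv := fun x => Subtype.ext (bwd_fwd m n' x.1 x.2 (rank_dysonFwd m n' x.1 x.2))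
  right_inv := fun x => Subtype.ext (fwd_bwd m n' x.1 x.2)


noncomputable def pcount (n : ℕ) : ℕ := Nat.card (Nat.Partition n)

lemma card_split (m n' : ℕ) :
    Nat.card {π : (n' + m + 1).Partition // (m : ℤ) ≤ rank π}
      + Nat.card {μ : n'.Partition // (m : ℤ) + 3 ≤ rank μ} = pcount n' := by
  classical
  have h1 : Nat.card {π : (n' + m + 1).Partition // (m : ℤ) ≤ rank π}
      = Nat.card {μ : n'.Partition // ¬ ((m : ℤ) + 3 ≤ rank μ)} := by
    rw [← Nat.card_congr (dysonEquiv m n')]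
    exact Nat.card_congr (Equiv.subtypeEquivRight (fun μ => by omega))
  rw [h1, Nat.add_comm, ← Nat.card_sum]
  exact Nat.card_congr (Equiv.sumCompl _)

lemma card_rank_ge_eq_zero (m k : ℕ) (h1 : 1 ≤ k) (h2 : k ≤ m) :
    Nat.card {π : k.Partition // (m : ℤ) ≤ rank π} = 0 := by
  have : IsEmpty {π : k.Partition // (m : ℤ) ≤ rank π} := by
    constructor
    rintro ⟨π, hπ⟩
    have hne : π.parts ≠ 0 := by
      intro h0
      have := π.parts_sum
      rw [h0] at this
      simp at this
      omega
    have hmem := sup_mem_of_ne_zero hne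
    have hsup : π.parts.sup ≤ k := by
      have := Multiset.le_sum_of_mem hmem
      rw [π.parts_sum] at this
      exact this
    have hcpos : 1 ≤ Multiset.card π.parts := by
      rw [Nat.one_le_iff_ne_zero, Ne, Multiset.card_eq_zero]; exact hne
    unfold rank at hπ
    omega
  exact Nat.card_of_isEmpty

lemma zeroPartition_parts (π : (0:ℕ).Partition) : π.parts = 0 := by
  have h := π.parts_sum
  by_contra hne
  obtain ⟨a, ha⟩ := Multiset.exists_mem_of_ne_zero hne
  have hpos := π.parts_pos ha
  have := Multiset.le_sum_of_mem ha
  omega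

lemma card_rank_ge_zero_partition (m : ℕ) :
    Nat.card {μ : (0:ℕ).Partition // (m : ℤ) + 3 ≤ rank μ} = 0 := by
  have : IsEmpty {μ : (0:ℕ).Partition // (m : ℤ) + 3 ≤ rank μ} := by
    constructor
    rintro ⟨μ, hμ⟩
    have h0 := zeroPartition_parts μ
    unfold rank at hμ
    rw [h0] at hμ
    simp at hμ
    omega
  exact Nat.card_of_isEmpty

lemma card_rank_le (m : ℤ) (k : ℕ) :
    Nat.card {π : k.Partition // m ≤ rank π} ≤ pcount k :=
  Nat.card_le_card_of_injective Subtype.val Subtype.val_injective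

def nwt (N : ℕ) (f : Fin N → ℕ) : ℕ := ∑ j : Fin N, ((j : ℕ) + 1) * f j

lemma nwt_le (N : ℕ) (f : Fin N → ℕ) (j : Fin N) : f j ≤ nwt N f := by
  unfold nwt
  calc f j ≤ ((j : ℕ) + 1) * f j := Nat.le_mul_of_pos_left _ (by omega)
  _ ≤ ∑ i : Fin N, ((i : ℕ) + 1) * f i :=
    Finset.single_le_sum (f := fun i : Fin N => ((i : ℕ) + 1) * f i)
      (fun i _ => Nat.zero_le _) (Finset.mem_univ j)

instance nwt_fiber_finite (N n : ℕ) : Finite {f : Fin N → ℕ // nwt N f = n} := by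
  apply Finite.of_injective
    (f := fun fp (j : Fin N) => (⟨fp.1 j, Nat.lt_succ_of_le (le_of_le_of_eq (nwt_le N fp.1 j) fp.2)⟩ : Fin (n+1)))
  intro a b hab
  apply Subtype.ext
  funext j
  have := congrFun hab j
  simpa using congrArg Fin.val this

lemma nwt_snoc (N : ℕ) (g : Fin N → ℕ) (a : ℕ) :
    nwt (N + 1) (Fin.snoc g a) = nwt N g + (N + 1) * a := by
  unfold nwt
  rw [Fin.sum_univ_castSucc]
  simp [Fin.snoc_castSucc, Fin.snoc_last]

lemma key_summable_tsum (c : ℝ) (hc : |c| < 1) (N : ℕ) :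
    Summable (fun f : Fin N → ℕ => |c| ^ nwt N f) ∧
      ∑' f : Fin N → ℕ, c ^ nwt N f = ∏ j ∈ Finset.range N, (1 - c ^ (j + 1))⁻¹ := by
  induction N with
  | zero =>
    have hfin : Finite (Fin 0 → ℕ) := Finite.of_subsingleton
    constructor
    · exact .of_finite
    · have h0 : ∀ f : Fin 0 → ℕ, nwt 0 f = 0 := by intro f; simp [nwt]
      have : ∀ f : Fin 0 → ℕ, c ^ nwt 0 f = 1 := by intro f; rw [h0, pow_zero]
      rw [tsum_congr this]
      simp [tsum_const, Nat.card_unique]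
  | succ N ih =>
    have habs : |c ^ (N + 1)| < 1 := by
      rw [abs_pow]; exact pow_lt_one₀ (abs_nonneg c) hc (by omega)
    have hgeo : Summable (fun k : ℕ => (|c| ^ (N + 1)) ^ k) :=
      summable_geometric_of_lt_one (pow_nonneg (abs_nonneg c) _)
        (pow_lt_one₀ (abs_nonneg c) hc (by omega))
    set e := Fin.snocEquiv (fun _ : Fin (N + 1) => ℕ)
    have he : ∀ p : ℕ × (Fin N → ℕ), e p = Fin.snoc p.2 p.1 := fun p => rfl
    constructor
    · rw [← e.summable_iff]
      have : ∀ p : ℕ × (Fin N → ℕ),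
          |c| ^ nwt (N + 1) (e p) = (|c| ^ (N + 1)) ^ p.1 * |c| ^ nwt N p.2 := by
        intro p
        rw [he, nwt_snoc, pow_add, ← pow_mul, mul_comm]
      have hs : Summable (fun p : ℕ × (Fin N → ℕ) =>
          (|c| ^ (N + 1)) ^ p.1 * |c| ^ nwt N p.2) :=
        Summable.mul_of_nonneg (f := fun k : ℕ => (|c| ^ (N + 1)) ^ k)
          (g := fun f : Fin N → ℕ => |c| ^ nwt N f) hgeo ih.1
          (fun k => pow_nonneg (pow_nonneg (abs_nonneg c) _) _)
          (fun f => pow_nonneg (abs_nonneg c) _)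
      exact (summable_congr (fun p => this p)).mpr hs
    · rw [← e.tsum_eq (fun f => c ^ nwt (N + 1) f)]
      have hre : ∀ p : ℕ × (Fin N → ℕ),
          c ^ nwt (N + 1) (e p) = (c ^ (N + 1)) ^ p.1 * c ^ nwt N p.2 := by
        intro p
        rw [he, nwt_snoc, pow_add, ← pow_mul, mul_comm]
      rw [tsum_congr hre]
      have hn1 : Summable (fun k : ℕ => ‖(c ^ (N + 1)) ^ k‖) := by
        simpa [abs_pow] using hgeo
      have hn2 : Summable (fun f : Fin N → ℕ => ‖c ^ nwt N f‖) := by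
        simpa [abs_pow] using ih.1
      have hmul := tsum_mul_tsum_of_summable_norm (f := fun k : ℕ => (c ^ (N + 1)) ^ k)
        (g := fun f : Fin N → ℕ => c ^ nwt N f) hn1 hn2
      rw [← hmul, ih.2, tsum_geometric_of_abs_lt_one habs, Finset.prod_range_succ]
      ring

-- regrouping by weight
lemma regroup_tsum {ι : Type} (w : ι → ℕ) (r : ℝ) (hs : Summable fun i => |r| ^ w i) :
    ∑' i, r ^ w i = ∑' n : ℕ, (Nat.card {i // w i = n} : ℝ) * r ^ n := by
  have hsr : Summable (fun i => r ^ w i) := by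
    apply Summable.of_abs
    simpa [abs_pow] using hs
  rw [← (Equiv.sigmaFiberEquiv w).tsum_eq (fun i => r ^ w i)]
  have hsig : Summable (fun p : Σ n : ℕ, {i // w i = n} => r ^ w p.2.1) :=
    ((Equiv.sigmaFiberEquiv w).summable_iff).mpr hsr
  have h0 : ∀ p : Σ n : ℕ, {i // w i = n},
      r ^ w ((Equiv.sigmaFiberEquiv w) p) = r ^ w p.2.1 := fun p => rfl
  rw [tsum_congr h0, Summable.tsum_sigma' (fun b => hsig.sigma_factor b) hsig]
  apply tsum_congr
  intro n
  have h1 : ∀ i : {i // w i = n}, r ^ w (i : ι) = r ^ n := fun i => by rw [i.2]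
  rw [tsum_congr h1, tsum_const, nsmul_eq_mul]

lemma regroup_summable {ι : Type} (w : ι → ℕ) (x : ℝ) (hx : 0 ≤ x)
    (hs : Summable fun i => x ^ w i) :
    Summable fun n : ℕ => (Nat.card {i // w i = n} : ℝ) * x ^ n := by
  have hsig : Summable (fun p : Σ n : ℕ, {i // w i = n} => x ^ w p.2.1) :=
    ((Equiv.sigmaFiberEquiv w).summable_iff).mpr hs
  have := hsig.sigma
  apply Summable.congr this
  intro n
  have h1 : ∀ i : {i // w i = n}, x ^ w (i : ι) = x ^ n := fun i => by rw [i.2]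
  rw [tsum_congr h1, tsum_const, nsmul_eq_mul]


/- ## multiplicity functions vs partitions -/

def toMultiset (N : ℕ) (f : Fin N → ℕ) : Multiset ℕ :=
  ∑ j : Fin N, Multiset.replicate (f j) ((j : ℕ) + 1)

lemma toMultiset_count (N : ℕ) (f : Fin N → ℕ) (j : Fin N) :
    (toMultiset N f).count ((j : ℕ) + 1) = f j := by
  unfold toMultiset
  rw [Multiset.count_sum']
  rw [Finset.sum_eq_single j]
  · rw [Multiset.count_replicate]; simp
  · intro i _ hij
    rw [Multiset.count_replicate, if_neg]
    intro hcontra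
    exact hij (Fin.ext (by omega))
  · intro h
    exact absurd (Finset.mem_univ j) h

lemma toMultiset_count_ne (N : ℕ) (f : Fin N → ℕ) (k : ℕ) (hk : ∀ j : Fin N, k ≠ (j : ℕ) + 1) :
    (toMultiset N f).count k = 0 := by
  unfold toMultiset
  rw [Multiset.count_sum']
  apply Finset.sum_eq_zero
  intro j _
  rw [Multiset.count_replicate, if_neg (fun h => hk j (by omega))]

lemma toMultiset_sum (N : ℕ) (f : Fin N → ℕ) : (toMultiset N f).sum = nwt N f := by
  unfold toMultiset nwt
  rw [Multiset.sum_sum]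
  apply Finset.sum_congr rfl
  intro j _
  rw [Multiset.sum_replicate, smul_eq_mul, mul_comm]

lemma toMultiset_pos (N : ℕ) (f : Fin N → ℕ) : ∀ x ∈ toMultiset N f, 0 < x := by
  intro x hx
  unfold toMultiset at hx
  obtain ⟨j, _, hj⟩ := Multiset.mem_sum.mp hx
  rw [Multiset.eq_of_mem_replicate hj]
  omega

def toPartition (N n : ℕ) (fp : {f : Fin N → ℕ // nwt N f = n}) : Nat.Partition n where
  parts := toMultiset N fp.1
  parts_pos := fun {i} hi => toMultiset_pos N fp.1 i hi
  parts_sum := by rw [toMultiset_sum, fp.2]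

lemma toPartition_injective (N n : ℕ) : Function.Injective (toPartition N n) := by
  intro a b hab
  apply Subtype.ext
  funext j
  have : (toPartition N n a).parts = (toPartition N n b).parts := by rw [hab]
  calc a.1 j = (toMultiset N a.1).count ((j : ℕ) + 1) := (toMultiset_count N a.1 j).symm
  _ = (toMultiset N b.1).count ((j : ℕ) + 1) := by rw [show toMultiset N a.1 = toMultiset N b.1 from this]
  _ = b.1 j := toMultiset_count N b.1 j

lemma toMultiset_counts (N n : ℕ) (hn : n ≤ N) (π : Nat.Partition n) :
    toMultiset N (fun j => π.parts.count ((j : ℕ) + 1)) = π.parts := by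
  ext k
  rcases Nat.eq_zero_or_pos k with rfl | hk
  · rw [toMultiset_count_ne N _ 0 (fun j => by omega)]
    symm
    rw [Multiset.count_eq_zero]
    intro hmem
    exact absurd (π.parts_pos hmem) (by omega)
  rcases le_or_gt k N with hkN | hkN
  · have hj : k = ((⟨k - 1, by omega⟩ : Fin N) : ℕ) + 1 := by simp; omega
    rw [hj, toMultiset_count]
  · rw [toMultiset_count_ne N _ k (fun j => by have := j.2; omega)]
    symm
    rw [Multiset.count_eq_zero]
    intro hmem
    have := Multiset.le_sum_of_mem hmem
    rw [π.parts_sum] at this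
    omega

noncomputable def partMultEquiv (N n : ℕ) (hn : n ≤ N) :
    {f : Fin N → ℕ // nwt N f = n} ≃ Nat.Partition n where
  toFun := toPartition N n
  invFun π := ⟨fun j => π.parts.count ((j : ℕ) + 1), by
    have h := toMultiset_counts N n hn π
    have := congrArg Multiset.sum h
    rw [toMultiset_sum, π.parts_sum] at this
    exact this⟩
  left_inv fp := by
    apply Subtype.ext
    funext j
    exact toMultiset_count N fp.1 j
  right_inv π := by
    apply Nat.Partition.ext
    exact toMultiset_counts N n hn π

noncomputable def pN (N n : ℕ) : ℕ := Nat.card {f : Fin N → ℕ // nwt N f = n}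

lemma pN_eq (N n : ℕ) (hn : n ≤ N) : pN N n = pcount n :=
  Nat.card_congr (partMultEquiv N n hn)

lemma pN_le (N n : ℕ) : pN N n ≤ pcount n :=
  Nat.card_le_card_of_injective (toPartition N n) (toPartition_injective N n)


/- ## Euler product -/


lemma pq_partial (q : ℝ) (hq : |q| < 1) (N : ℕ) :
    ∑' n : ℕ, (pN N n : ℝ) * q ^ n = ∏ j ∈ Finset.range N, (1 - q ^ (j + 1))⁻¹ := by
  have h1 := regroup_tsum (nwt N) q (key_summable_tsum q hq N).1
  have h2 := (key_summable_tsum q hq N).2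
  calc ∑' n : ℕ, (pN N n : ℝ) * q ^ n
      = ∑' n : ℕ, (Nat.card {f : Fin N → ℕ // nwt N f = n} : ℝ) * q ^ n := rfl
  _ = ∑' f : Fin N → ℕ, q ^ nwt N f := h1.symm
  _ = ∏ j ∈ Finset.range N, (1 - q ^ (j + 1))⁻¹ := h2

lemma summable_pN (x : ℝ) (h0 : 0 ≤ x) (hx : x < 1) (N : ℕ) :
    Summable (fun n : ℕ => (pN N n : ℝ) * x ^ n) := by
  have hxa : |x| < 1 := by rwa [abs_of_nonneg h0]
  have hs := (key_summable_tsum x hxa N).1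
  rw [abs_of_nonneg h0] at hs
  exact regroup_summable (nwt N) x h0 hs

lemma prod_le_exp (x : ℝ) (h0 : 0 ≤ x) (hx : x < 1) (N : ℕ) :
    ∏ j ∈ Finset.range N, (1 - x ^ (j + 1))⁻¹ ≤ Real.exp (x / ((1 - x) * (1 - x))) := by
  have hfac : ∀ j ∈ Finset.range N, (1 - x ^ (j + 1))⁻¹ ≤ Real.exp (x ^ (j + 1) / (1 - x)) := by
    intro j _
    have ht1 : x ^ (j + 1) < 1 := pow_lt_one₀ h0 hx (by omega)
    have ht0 : 0 ≤ x ^ (j + 1) := pow_nonneg h0 _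
    have htx : x ^ (j + 1) ≤ x := by
      calc x ^ (j + 1) ≤ x ^ 1 := pow_le_pow_of_le_one h0 hx.le (by omega)
      _ = x := pow_one x
    have hpos : 0 < 1 - x ^ (j + 1) := by linarith
    have hxpos : 0 < 1 - x := by linarith
    have heq : (1 - x ^ (j + 1))⁻¹ = 1 + x ^ (j + 1) / (1 - x ^ (j + 1)) := by
      field_simp
      ring
    have hdiv : x ^ (j + 1) / (1 - x ^ (j + 1)) ≤ x ^ (j + 1) / (1 - x) := by
      gcongr <;> linarith
    have hexp := Real.add_one_le_exp (x ^ (j + 1) / (1 - x))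
    rw [heq]
    linarith
  calc ∏ j ∈ Finset.range N, (1 - x ^ (j + 1))⁻¹
      ≤ ∏ j ∈ Finset.range N, Real.exp (x ^ (j + 1) / (1 - x)) := by
        apply Finset.prod_le_prod
        · intro j _
          have ht1 : x ^ (j + 1) < 1 := pow_lt_one₀ h0 hx (by omega)
          have hp : (0:ℝ) < 1 - x ^ (j + 1) := by linarith
          positivity
        · exact hfac
  _ = Real.exp (∑ j ∈ Finset.range N, x ^ (j + 1) / (1 - x)) := (Real.exp_sum _ _).symm
  _ ≤ Real.exp (x / ((1 - x) * (1 - x))) := by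
    apply Real.exp_le_exp.mpr
    have hxpos : 0 < 1 - x := by linarith
    rw [← Finset.sum_div]
    rw [div_le_div_iff₀ hxpos (by positivity)]
    have hgeom : ∑ j ∈ Finset.range N, x ^ (j + 1) ≤ x / (1 - x) := by
      have h1 : ∀ j ∈ Finset.range N, x ^ (j + 1) = x * x ^ j := by
        intro j _
        rw [pow_succ, mul_comm]
      rw [Finset.sum_congr rfl h1, ← Finset.mul_sum]
      have h2 : ∑ j ∈ Finset.range N, x ^ j ≤ (1 - x)⁻¹ := by
        have h3 := Summable.sum_le_tsum (Finset.range N) (fun i _ => pow_nonneg h0 i)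
          (summable_geometric_of_lt_one h0 hx)
        rwa [tsum_geometric_of_lt_one h0 hx] at h3
      calc x * ∑ j ∈ Finset.range N, x ^ j ≤ x * (1 - x)⁻¹ := by
            apply mul_le_mul_of_nonneg_left h2 h0
      _ = x / (1 - x) := by rw [div_eq_mul_inv]
    calc (∑ j ∈ Finset.range N, x ^ (j + 1)) * ((1 - x) * (1 - x))
        ≤ (x / (1 - x)) * ((1 - x) * (1 - x)) := by
          apply mul_le_mul_of_nonneg_right hgeom (by positivity)
    _ = x * (1 - x) := by field_simp

lemma summable_pcount (x : ℝ) (h0 : 0 ≤ x) (hx : x < 1) :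
    Summable (fun n : ℕ => (pcount n : ℝ) * x ^ n) := by
  apply summable_of_sum_range_le (c := Real.exp (x / ((1 - x) * (1 - x))))
  · intro n
    positivity
  · intro M
    have heq : ∀ n ∈ Finset.range M, (pcount n : ℝ) * x ^ n = (pN M n : ℝ) * x ^ n := by
      intro n hn
      rw [pN_eq M n (le_of_lt (Finset.mem_range.mp hn))]
    rw [Finset.sum_congr rfl heq]
    calc ∑ n ∈ Finset.range M, (pN M n : ℝ) * x ^ n
        ≤ ∑' n : ℕ, (pN M n : ℝ) * x ^ n :=
          Summable.sum_le_tsum _ (fun i _ => by positivity) (summable_pN x h0 hx M)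
    _ = ∏ j ∈ Finset.range M, (1 - x ^ (j + 1))⁻¹ := pq_partial x (by rwa [abs_of_nonneg h0]) M
    _ ≤ Real.exp (x / ((1 - x) * (1 - x))) := prod_le_exp x h0 hx M

lemma summable_pcount_q (q : ℝ) (hq : |q| < 1) :
    Summable (fun n : ℕ => (pcount n : ℝ) * q ^ n) := by
  apply Summable.of_abs
  have := summable_pcount |q| (abs_nonneg q) hq
  apply Summable.congr this
  intro n
  rw [abs_mul, abs_pow, Nat.abs_cast]

lemma tendsto_pN_tsum (q : ℝ) (hq : |q| < 1) :
    Filter.Tendsto (fun N => ∑' n : ℕ, (pN N n : ℝ) * q ^ n) atTop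
      (nhds (∑' n : ℕ, (pcount n : ℝ) * q ^ n)) := by
  have h0 : (0:ℝ) ≤ |q| := abs_nonneg q
  have hg : Summable (fun n : ℕ => (pcount n : ℝ) * |q| ^ n) := summable_pcount |q| h0 hq
  have hgq : Summable (fun n : ℕ => (pcount n : ℝ) * q ^ n) := summable_pcount_q q hq
  have hpNq : ∀ N, Summable (fun n : ℕ => (pN N n : ℝ) * q ^ n) := by
    intro N
    apply Summable.of_abs
    apply Summable.congr (summable_pN |q| h0 hq N)
    intro n
    rw [abs_mul, abs_pow, Nat.abs_cast]
  have hbound : ∀ N : ℕ,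
      ‖(∑' n : ℕ, (pcount n : ℝ) * q ^ n) - ∑' n : ℕ, (pN N n : ℝ) * q ^ n‖
        ≤ ∑' k : ℕ, (pcount (k + (N + 1)) : ℝ) * |q| ^ (k + (N + 1)) := by
    intro N
    have hdiff : (∑' n : ℕ, (pcount n : ℝ) * q ^ n) - ∑' n : ℕ, (pN N n : ℝ) * q ^ n
        = ∑' n : ℕ, ((pcount n : ℝ) - pN N n) * q ^ n := by
      rw [← Summable.tsum_sub hgq (hpNq N)]
      apply tsum_congr
      intro n
      ring
    have hterm : ∀ n : ℕ, ‖((pcount n : ℝ) - pN N n) * q ^ n‖ ≤ (pcount n : ℝ) * |q| ^ n := by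
      intro n
      rw [norm_mul, norm_pow, Real.norm_eq_abs, Real.norm_eq_abs]
      have h3 : (pN N n : ℝ) ≤ (pcount n : ℝ) := Nat.cast_le.mpr (pN_le N n)
      have h2 : (0:ℝ) ≤ (pN N n : ℝ) := Nat.cast_nonneg _
      have h1 : |(pcount n : ℝ) - pN N n| ≤ (pcount n : ℝ) := by
        rw [abs_le]; constructor <;> linarith
      exact mul_le_mul_of_nonneg_right h1 (by positivity)
    have habs : Summable (fun n : ℕ => ‖((pcount n : ℝ) - pN N n) * q ^ n‖) :=
      Summable.of_nonneg_of_le (fun n => norm_nonneg _) hterm hg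
    rw [hdiff]
    calc ‖∑' n : ℕ, ((pcount n : ℝ) - pN N n) * q ^ n‖
        ≤ ∑' n : ℕ, ‖((pcount n : ℝ) - pN N n) * q ^ n‖ :=
          norm_tsum_le_tsum_norm habs
    _ ≤ ∑' k : ℕ, (pcount (k + (N + 1)) : ℝ) * |q| ^ (k + (N + 1)) := by
        have hsplit := Summable.sum_add_tsum_nat_add (f := fun n : ℕ =>
          ‖((pcount n : ℝ) - pN N n) * q ^ n‖) (N + 1) habs
        have hzero : ∑ i ∈ Finset.range (N + 1),
            ‖((pcount i : ℝ) - pN N i) * q ^ i‖ = 0 := by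
          apply Finset.sum_eq_zero
          intro i hi
          have hiN : i ≤ N := by
            have := Finset.mem_range.mp hi
            omega
          rw [pN_eq N i hiN]
          simp
        have htail : ∑' k : ℕ, ‖((pcount (k + (N + 1)) : ℝ) - pN N (k + (N + 1)))
              * q ^ (k + (N + 1))‖
            ≤ ∑' k : ℕ, (pcount (k + (N + 1)) : ℝ) * |q| ^ (k + (N + 1)) :=
          Summable.tsum_le_tsum (fun k => hterm (k + (N + 1)))
            ((summable_nat_add_iff
              (f := fun n : ℕ => ‖((pcount n : ℝ) - pN N n) * q ^ n‖) (N + 1)).mpr habs)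
            ((summable_nat_add_iff
              (f := fun n : ℕ => (pcount n : ℝ) * |q| ^ n) (N + 1)).mpr hg)
        rw [← hsplit, hzero, zero_add]
        exact htail
  have hT : Filter.Tendsto
      (fun N : ℕ => ∑' k : ℕ, (pcount (k + (N + 1)) : ℝ) * |q| ^ (k + (N + 1)))
      atTop (nhds 0) := by
    have h1 := tendsto_sum_nat_add (fun n : ℕ => (pcount n : ℝ) * |q| ^ n)
    exact h1.comp (Filter.tendsto_add_atTop_nat 1)
  have hzero := squeeze_zero_norm hbound hT
  have hfin : Filter.Tendsto (fun N : ℕ => (∑' n : ℕ, (pcount n : ℝ) * q ^ n)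
      - ((∑' n : ℕ, (pcount n : ℝ) * q ^ n) - ∑' n : ℕ, (pN N n : ℝ) * q ^ n)) atTop
      (nhds ((∑' n : ℕ, (pcount n : ℝ) * q ^ n) - 0)) := tendsto_const_nhds.sub hzero
  simp only [sub_sub_cancel, sub_zero] at hfin
  exact hfin

lemma abs_log_one_sub_le (t : ℝ) (h : |t| < 1) : |Real.log (1 - t)| ≤ |t| / (1 - |t|) := by
  obtain ⟨h1, h2⟩ := abs_lt.mp h
  have hy : (0:ℝ) < 1 - t := by linarith
  have hd : (0:ℝ) < 1 - |t| := by linarith [abs_lt.mp h]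
  have hub := Real.log_le_sub_one_of_pos hy
  have hlb := Real.log_le_sub_one_of_pos (inv_pos.mpr hy)
  rw [Real.log_inv] at hlb
  have heq : (1 - t)⁻¹ - 1 = t / (1 - t) := by field_simp; ring
  have habs : |t| ≤ |t| / (1 - |t|) := by
    rw [le_div_iff₀ hd]
    nlinarith [abs_nonneg t]
  rw [abs_le]
  constructor
  · have hle : t / (1 - t) ≤ |t| / (1 - |t|) := by
      rcases le_or_gt 0 t with ht | ht
      · rw [abs_of_nonneg ht]
      · have hneg : t / (1 - t) ≤ 0 := div_nonpos_of_nonpos_of_nonneg ht.le hy.le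
        exact le_trans hneg (div_nonneg (abs_nonneg t) hd.le)
    rw [heq] at hlb
    linarith
  · have : -t ≤ |t| := neg_le_abs t
    linarith

lemma multipliable_euler (q : ℝ) (hq : |q| < 1) :
    Multipliable (fun j : ℕ => 1 - q ^ (j + 1)) := by
  have hpos : ∀ j : ℕ, (0:ℝ) < 1 - q ^ (j + 1) := by
    intro j
    have : |q ^ (j + 1)| < 1 := by
      rw [abs_pow]
      exact pow_lt_one₀ (abs_nonneg q) hq (by omega)
    linarith [(abs_lt.mp this).2]
  have hlog : Summable (fun j : ℕ => Real.log (1 - q ^ (j + 1))) := by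
    apply Summable.of_norm_bounded (g := fun j : ℕ => |q| ^ (j + 1) / (1 - |q|))
    · have hgeo : Summable (fun j : ℕ => |q| ^ j * (|q| * (1 - |q|)⁻¹)) :=
        (summable_geometric_of_lt_one (abs_nonneg q) hq).mul_right _
      apply Summable.congr hgeo
      intro j
      rw [pow_succ]
      field_simp
    · intro j
      have habsj : |q ^ (j + 1)| < 1 := by
        rw [abs_pow]
        exact pow_lt_one₀ (abs_nonneg q) hq (by omega)
      have h1 := abs_log_one_sub_le (q ^ (j + 1)) habsj
      rw [Real.norm_eq_abs]
      apply le_trans h1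
      rw [abs_pow]
      have hle : |q| ^ (j + 1) ≤ |q| := by
        calc |q| ^ (j + 1) ≤ |q| ^ 1 := pow_le_pow_of_le_one (abs_nonneg q) hq.le (by omega)
        _ = |q| := pow_one _
      have hd1 : (0:ℝ) < 1 - |q| := by linarith
      have hd2 : 1 - |q| ≤ 1 - |q| ^ (j + 1) := by linarith
      gcongr
  exact Real.multipliable_of_summable_log hpos hlog

lemma euler_mul (q : ℝ) (hq : |q| < 1) :
    (∑' n : ℕ, (pcount n : ℝ) * q ^ n) * euler q = 1 := by
  have hpos : ∀ j : ℕ, (0:ℝ) < 1 - q ^ (j + 1) := by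
    intro j
    have : |q ^ (j + 1)| < 1 := by
      rw [abs_pow]
      exact pow_lt_one₀ (abs_nonneg q) hq (by omega)
    linarith [(abs_lt.mp this).2]
  have hF : Filter.Tendsto (fun N => ∏ j ∈ Finset.range N, (1 - q ^ (j + 1)))
      atTop (nhds (euler q)) := (multipliable_euler q hq).hasProd.tendsto_prod_nat
  have hFne : ∀ N : ℕ, (∏ j ∈ Finset.range N, (1 - q ^ (j + 1))) ≠ 0 := by
    intro N
    apply Finset.prod_ne_zero_iff.mpr
    intro j _
    exact ne_of_gt (hpos j)
  have hP := tendsto_pN_tsum q hq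
  have hPN : ∀ N : ℕ, ∑' n : ℕ, (pN N n : ℝ) * q ^ n
      = (∏ j ∈ Finset.range N, (1 - q ^ (j + 1)))⁻¹ := by
    intro N
    rw [pq_partial q hq N, ← Finset.prod_inv_distrib]
  have hmul : Filter.Tendsto (fun N => (∑' n : ℕ, (pN N n : ℝ) * q ^ n)
      * ∏ j ∈ Finset.range N, (1 - q ^ (j + 1))) atTop
      (nhds ((∑' n : ℕ, (pcount n : ℝ) * q ^ n) * euler q)) := hP.mul hF
  have hone : ∀ N : ℕ, (∑' n : ℕ, (pN N n : ℝ) * q ^ n)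
      * ∏ j ∈ Finset.range N, (1 - q ^ (j + 1)) = 1 := by
    intro N
    rw [hPN N]
    exact inv_mul_cancel₀ (hFne N)
  have hconst : Filter.Tendsto (fun _ : ℕ => (1:ℝ)) atTop
      (nhds ((∑' n : ℕ, (pcount n : ℝ) * q ^ n) * euler q)) := by
    apply Filter.Tendsto.congr (fun N => hone N)
    exact hmul
  have := tendsto_nhds_unique hconst tendsto_const_nhds
  linarith [this]

lemma euler_inv (q : ℝ) (hq : |q| < 1) :
    (euler q)⁻¹ = ∑' n : ℕ, (pcount n : ℝ) * q ^ n := by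
  have h := euler_mul q hq
  exact inv_eq_of_mul_eq_one_left h

end Aux

/-- for m ≥ 0, `Q_m(q) + q^{m+1} Q_{m+3}(q) = q^{m+1}/(q;q)_∞`. -/
theorem stmt2 (q : ℝ) (hq : |q| < 1) (m : ℕ) :
    Q q m + q ^ (m + 1) * Q q (m + 3) = q ^ (m + 1) * (euler q)⁻¹ := by
  -- abbreviations
  set A : ℕ → ℝ := fun k => (Nat.card {π : k.Partition // (m : ℤ) ≤ rank π} : ℝ) with hA
  set B : ℕ → ℝ := fun k => (Nat.card {π : k.Partition // (m : ℤ) + 3 ≤ rank π} : ℝ) with hB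
  -- summability facts
  have hpc : Summable (fun n : ℕ => (pcount n : ℝ) * |q| ^ n) :=
    summable_pcount |q| (abs_nonneg q) hq
  have hQAsum : Summable (fun n : ℕ => A (n + 1) * q ^ (n + 1)) := by
    apply Summable.of_norm_bounded (g := fun n : ℕ => (pcount (n + 1) : ℝ) * |q| ^ (n + 1))
      ((summable_nat_add_iff (f := fun n : ℕ => (pcount n : ℝ) * |q| ^ n) 1).mpr hpc)
    intro n
    rw [norm_mul, norm_pow, Real.norm_eq_abs, Real.norm_eq_abs, Nat.abs_cast]
    apply mul_le_mul_of_nonneg_right _ (by positivity)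
    exact_mod_cast card_rank_le (m : ℤ) (n + 1)
  have hQBsum : Summable (fun n : ℕ => B (n + 1) * q ^ (n + 1)) := by
    apply Summable.of_norm_bounded (g := fun n : ℕ => (pcount (n + 1) : ℝ) * |q| ^ (n + 1))
      ((summable_nat_add_iff (f := fun n : ℕ => (pcount n : ℝ) * |q| ^ n) 1).mpr hpc)
    intro n
    rw [norm_mul, norm_pow, Real.norm_eq_abs, Real.norm_eq_abs, Nat.abs_cast]
    apply mul_le_mul_of_nonneg_right _ (by positivity)
    exact_mod_cast card_rank_le ((m : ℤ) + 3) (n + 1)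
  -- identify Q's
  have hQA : Q q m = ∑' n : ℕ, A (n + 1) * q ^ (n + 1) := rfl
  have hQB : Q q ((m : ℤ) + 3) = ∑' n : ℕ, B (n + 1) * q ^ (n + 1) := rfl
  -- shift Q_m by m
  have hshift := Summable.sum_add_tsum_nat_add (f := fun n : ℕ => A (n + 1) * q ^ (n + 1)) m hQAsum
  have hzero : ∑ i ∈ Finset.range m, A (i + 1) * q ^ (i + 1) = 0 := by
    apply Finset.sum_eq_zero
    intro i hi
    have hi' := Finset.mem_range.mp hi
    have : A (i + 1) = 0 := by
      rw [hA]
      simp only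
      rw [card_rank_ge_eq_zero m (i + 1) (by omega) (by omega)]
      norm_num
    rw [this, zero_mul]
  have hQm : Q q m = ∑' n : ℕ, A (n + m + 1) * q ^ (n + m + 1) := by
    rw [hQA, ← hshift, hzero, zero_add]
  have hQmsum : Summable (fun n : ℕ => A (n + m + 1) * q ^ (n + m + 1)) :=
    (summable_nat_add_iff (f := fun n : ℕ => A (n + 1) * q ^ (n + 1)) m).mpr hQAsum
  -- peel first term
  have hpeel := Summable.sum_add_tsum_nat_add
    (f := fun n : ℕ => A (n + m + 1) * q ^ (n + m + 1)) 1 hQmsum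
  rw [Finset.sum_range_one] at hpeel
  have hQm2 : Q q m = A (m + 1) * q ^ (m + 1)
      + ∑' n : ℕ, A (n + m + 2) * q ^ (n + m + 2) := by
    rw [hQm, ← hpeel]
    congr 1
    · norm_num
    · apply tsum_congr
      intro n
      show A (n + 1 + m + 1) * q ^ (n + 1 + m + 1) = _
      rw [show n + 1 + m + 1 = n + m + 2 from by omega]
  -- B-part
  have hQB2 : q ^ (m + 1) * Q q ((m : ℤ) + 3)
      = ∑' n : ℕ, B (n + 1) * q ^ (n + m + 2) := by
    rw [hQB, ← tsum_mul_left]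
    apply tsum_congr
    intro n
    rw [show n + m + 2 = (n + 1) + (m + 1) from by omega, pow_add]
    ring
  have hBsum2 : Summable (fun n : ℕ => B (n + 1) * q ^ (n + m + 2)) := by
    apply Summable.congr (hQBsum.mul_left (q ^ (m + 1)))
    intro n
    rw [show n + m + 2 = (n + 1) + (m + 1) from by omega, pow_add]
    ring
  have hAsum2 : Summable (fun n : ℕ => A (n + m + 2) * q ^ (n + m + 2)) := by
    apply Summable.congr ((summable_nat_add_iff
      (f := fun n : ℕ => A (n + m + 1) * q ^ (n + m + 1)) 1).mpr hQmsum)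
    intro n
    rw [show n + 1 + m + 1 = n + m + 2 from by omega]
  -- coefficient identity
  have hcoeff : ∀ n : ℕ, A (n + m + 2) + B (n + 1) = (pcount (n + 1) : ℝ) := by
    intro n
    have h := card_split m (n + 1)
    rw [show n + 1 + m + 1 = n + m + 2 from by omega] at h
    rw [hA, hB]
    simp only
    exact_mod_cast congrArg (Nat.cast : ℕ → ℝ) h
  have hA1 : A (m + 1) = (pcount 0 : ℝ) := by
    have h := card_split m 0
    rw [show 0 + m + 1 = m + 1 from by omega, card_rank_ge_zero_partition m] at h
    rw [hA]
    simp only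
    exact_mod_cast congrArg (Nat.cast : ℕ → ℝ) (by omega : Nat.card {π : (m+1).Partition // (m : ℤ) ≤ rank π} = pcount 0)
  -- RHS
  have hS : Summable (fun n : ℕ => (pcount n : ℝ) * q ^ (n + m + 1)) := by
    apply Summable.congr ((summable_pcount_q q hq).mul_left (q ^ (m + 1)))
    intro n
    rw [show n + m + 1 = n + (m + 1) from by omega, pow_add]
    ring
  have hRHS : q ^ (m + 1) * (euler q)⁻¹
      = ∑' n : ℕ, (pcount n : ℝ) * q ^ (n + m + 1) := by
    rw [euler_inv q hq, ← tsum_mul_left]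
    apply tsum_congr
    intro n
    rw [show n + m + 1 = n + (m + 1) from by omega, pow_add]
    ring
  have hRpeel := Summable.sum_add_tsum_nat_add
    (f := fun n : ℕ => (pcount n : ℝ) * q ^ (n + m + 1)) 1 hS
  rw [Finset.sum_range_one] at hRpeel
  have hRHS2 : q ^ (m + 1) * (euler q)⁻¹ = (pcount 0 : ℝ) * q ^ (m + 1)
      + ∑' n : ℕ, (pcount (n + 1) : ℝ) * q ^ (n + m + 2) := by
    rw [hRHS, ← hRpeel]
    congr 1
    · norm_num
    · apply tsum_congr
      intro n
      show (pcount (n + 1) : ℝ) * q ^ (n + 1 + m + 1) = _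
      rw [show n + 1 + m + 1 = n + m + 2 from by omega]
  -- put everything together
  rw [hQm2, hQB2, hRHS2, hA1]
  rw [add_assoc, ← Summable.tsum_add hAsum2 hBsum2]
  congr 1
  apply tsum_congr
  intro n
  rw [← hcoeff n]
  ring


end Dyson
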